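/- Under the stated OLS setup, the coefficient vector of X in the joint regression satisfies β̂_x = β̂₀ − α̂·β̂_z, where β̂₀ = (XᵀX)⁻¹Xᵀy is the OLS coefficient vector of the reduced regression of y on X alone and α̂ = (XᵀX)⁻¹Xᵀz is the OLS coefficient vector of the regression of z on X. -/
import Mathlib


open Matrix

/-- **Frisch–Waugh representation of the OLS coefficient of `z`.**
Under the stated OLS setup (joint OLS coefficients `(β̂_x, β̂_z)` obtained by stacking
them as `([X z]ᵀ[X z])⁻¹[X z]ᵀy`), the coefficient of `z` satisfies
`β̂_z = (z − zhat)ᵀy / k`, where `zhat = X(XᵀX)⁻¹Xᵀz` and `k = (z − zhat)ᵀ(z − zhat)`. -/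
theorem ols_beta_x_update
    {n p : ℕ} (hn : 0 < n) (hp : 0 < p)
    (X : Matrix (Fin n) (Fin p) ℝ) (z y : Fin n → ℝ)
    -- the augmented matrix `W = [X z]` (last column is `z`)
    (W : Matrix (Fin n) (Fin (p + 1)) ℝ)
    (hW : W = Matrix.of fun i j => Fin.lastCases (z i) (fun j' => X i j') j)
    -- the augmented Gram matrix `[X z]ᵀ[X z]` is invertible
    (hWunit : IsUnit (Wᵀ * W).det)
    -- hence `XᵀX` is invertible
    (hXunit : IsUnit (Xᵀ * X).det)
    -- stacked joint OLS coefficients `b = ([X z]ᵀ[X z])⁻¹[X z]ᵀy`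
    (b : Fin (p + 1) → ℝ) (hb : b = (Wᵀ * W)⁻¹ *ᵥ (Wᵀ *ᵥ y))
    (βx : Fin p → ℝ) (βz : ℝ)
    (hβx : βx = fun j => b j.castSucc) (hβz : βz = b (Fin.last p))
    -- `zhat = X(XᵀX)⁻¹Xᵀz` and `k = (z − zhat)ᵀ(z − zhat)`
    (zhat : Fin n → ℝ) (hzhat : zhat = X *ᵥ ((Xᵀ * X)⁻¹ *ᵥ (Xᵀ *ᵥ z)))
    (k : ℝ) (hk : k = (z - zhat) ⬝ᵥ (z - zhat))
    -- reduced-model OLS coefficients `β̂₀ = (XᵀX)⁻¹Xᵀy`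
    (β0 : Fin p → ℝ) (hβ0 : β0 = (Xᵀ * X)⁻¹ *ᵥ (Xᵀ *ᵥ y))
    -- OLS coefficients of the regression of `z` on `X`: `α̂ = (XᵀX)⁻¹Xᵀz`
    (α : Fin p → ℝ) (hα : α = (Xᵀ * X)⁻¹ *ᵥ (Xᵀ *ᵥ z)) :
    βx = β0 - βz • α := by
  -- normal equations for the joint regression
  have hWb : (Wᵀ * W) *ᵥ b = Wᵀ *ᵥ y := by
    rw [hb, mulVec_mulVec, Matrix.mul_nonsing_inv _ hWunit, Matrix.one_mulVec]
  -- top block of the normal equations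
  have key : (Xᵀ * X) *ᵥ βx + βz • (Xᵀ *ᵥ z) = Xᵀ *ᵥ y := by
    funext i
    have h := congrFun hWb i.castSucc
    simp only [mulVec, dotProduct, Matrix.mul_apply, Matrix.transpose_apply, hW,
      Matrix.of_apply] at h
    simp only [Fin.lastCases_castSucc] at h
    rw [Fin.sum_univ_castSucc] at h
    simp only [Fin.lastCases_castSucc, Fin.lastCases_last] at h
    simp only [mulVec, dotProduct, Matrix.mul_apply, Matrix.transpose_apply,
      Pi.add_apply, Pi.smul_apply, smul_eq_mul, hβx, hβz]
    rw [← h]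
    ring_nf
  -- multiply by `(XᵀX)⁻¹`
  have h2 : βx = (Xᵀ * X)⁻¹ *ᵥ ((Xᵀ * X) *ᵥ βx) := by
    rw [mulVec_mulVec, Matrix.nonsing_inv_mul _ hXunit, Matrix.one_mulVec]
  have h3 : (Xᵀ * X) *ᵥ βx = Xᵀ *ᵥ y - βz • (Xᵀ *ᵥ z) := by
    rw [← key]; abel
  rw [h2, h3, mulVec_sub, mulVec_smul, ← hβ0, ← hα]
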